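/- arXiv:1804.07566 — 3 statements merged into one kernel-verified Lean document; each statement's English description precedes it below -/
import Mathlib

section
/- Let $A$ be a $p \times p$ real symmetric positive semidefinite matrix, $M \subset \{1,\dots,p\}$, and suppose all diagonal entries of the principal submatrix $A_M$ are positive. If $\|A_M - I_{|M|}\|_{op} \le \kappa$ with $\kappa \in [0,1)$, then $\|\mathrm{corr}(A_M) - I_{|M|}\|_{op} \le 2\kappa/(1-\kappa)$, where $\mathrm{corr}(B) = D^{-1/2} B D^{-1/2}$ with $D = \mathrm{diag}(B)$. -/
open Matrix
open scoped Matrix.Norms.L2Operator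

set_option maxHeartbeats 1000000

lemma coord_le_norm {ι : Type*} [Fintype ι] (y : EuclideanSpace ℝ ι) (i : ι) :
    |y i| ≤ ‖y‖ := by
  rw [EuclideanSpace.norm_eq]
  refine Real.abs_le_sqrt ?_
  calc (y i)^2 = ‖y i‖^2 := by rw [Real.norm_eq_abs, sq_abs]
  _ ≤ ∑ j, ‖y j‖^2 :=
    Finset.single_le_sum (f := fun j => ‖y j‖^2) (fun j _ => sq_nonneg _) (Finset.mem_univ i)

lemma entry_le_opNorm {ι : Type*} [Fintype ι] [DecidableEq ι] (A : Matrix ι ι ℝ) (i j : ι) :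
    |A i j| ≤ ‖A‖ := by
  set x : EuclideanSpace ℝ ι := EuclideanSpace.single j 1 with hxdef
  have h2 := Matrix.l2_opNorm_mulVec A x
  have h3 : ‖x‖ = 1 := by rw [hxdef, EuclideanSpace.norm_single]; simp
  rw [h3, mul_one] at h2
  refine le_trans ?_ h2
  have hAv : (A *ᵥ (x : ι → ℝ)) = fun k => A k j := by
    ext k
    simp [Matrix.mulVec, dotProduct, hxdef, EuclideanSpace.single_apply, mul_ite]
  rw [hAv]
  exact coord_le_norm ((EuclideanSpace.equiv ι ℝ).symm fun k => A k j) i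

lemma opNorm_diagonal_le {ι : Type*} [Fintype ι] [DecidableEq ι] (v : ι → ℝ) (c : ℝ)
    (hc : 0 ≤ c) (h : ∀ i, |v i| ≤ c) :
    ‖Matrix.toEuclideanCLM (𝕜 := ℝ) (Matrix.diagonal v)‖ ≤ c := by
  refine ContinuousLinearMap.opNorm_le_bound _ hc fun x => ?_
  have key : ∀ i, (Matrix.toEuclideanCLM (𝕜 := ℝ) (Matrix.diagonal v) x) i = v i * x i := by
    intro i
    have h5 := Matrix.ofLp_toEuclideanCLM (𝕜 := ℝ) (Matrix.diagonal v) x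
    have : (Matrix.toEuclideanCLM (𝕜 := ℝ) (Matrix.diagonal v) x) i
        = (WithLp.ofLp (Matrix.toEuclideanCLM (𝕜 := ℝ) (Matrix.diagonal v) x)) i := rfl
    rw [this, h5, Matrix.mulVec_diagonal]
  rw [EuclideanSpace.norm_eq, EuclideanSpace.norm_eq,
    ← Real.sqrt_sq hc, ← Real.sqrt_mul (sq_nonneg c)]
  refine Real.sqrt_le_sqrt ?_
  rw [Finset.mul_sum]
  refine Finset.sum_le_sum fun i _ => ?_
  rw [key i, Real.norm_eq_abs, Real.norm_eq_abs, abs_mul, mul_pow]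
  have h1 : |v i|^2 ≤ c^2 := by nlinarith [h i, abs_nonneg (v i)]
  nlinarith [sq_nonneg (x i), sq_abs (x i), abs_nonneg (x i)]

/-- Operator (spectral) norm of a real square matrix. -/
noncomputable def opNorm {ι : Type*} [Fintype ι] [DecidableEq ι]
    (A : Matrix ι ι ℝ) : ℝ :=
  ‖Matrix.toEuclideanCLM (𝕜 := ℝ) A‖

/-- The correlation matrix `D^{-1/2} B D^{-1/2}` with `D = diag(B)`. -/
noncomputable def corr {ι : Type*} (B : Matrix ι ι ℝ) : Matrix ι ι ℝ :=
  Matrix.of fun i j => B i j / (Real.sqrt (B i i) * Real.sqrt (B j j))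

theorem stmt_4 (p : ℕ) (A : Matrix (Fin p) (Fin p) ℝ) (hA : A.PosSemidef)
    (M : Finset (Fin p)) (hdiag : ∀ i ∈ M, 0 < A i i)
    (κ : ℝ) (hκ : κ ∈ Set.Ico (0 : ℝ) 1)
    (hop : opNorm ((A.submatrix (Subtype.val : {x // x ∈ M} → Fin p)
        (Subtype.val : {x // x ∈ M} → Fin p)) - 1) ≤ κ) :
    opNorm (corr (A.submatrix (Subtype.val : {x // x ∈ M} → Fin p)
        (Subtype.val : {x // x ∈ M} → Fin p)) - 1) ≤ 2 * κ / (1 - κ) := by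
  obtain ⟨hκ0, hκ1⟩ := hκ
  have hκ' : (0:ℝ) < 1 - κ := by linarith
  set B := A.submatrix (Subtype.val : {x // x ∈ M} → Fin p)
      (Subtype.val : {x // x ∈ M} → Fin p) with hBdef
  have hop' : ‖B - 1‖ ≤ κ := hop
  have hdiagB : ∀ i, |B i i - 1| ≤ κ := by
    intro i
    have h := entry_le_opNorm (B - 1) i i
    rw [Matrix.sub_apply, Matrix.one_apply_eq] at h
    exact h.trans hop'
  have hBlo : ∀ i, 1 - κ ≤ B i i := by
    intro i; have := abs_le.mp (hdiagB i); linarith [this.1]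
  have hBpos : ∀ i, 0 < B i i := fun i => lt_of_lt_of_le hκ' (hBlo i)
  set s : {x // x ∈ M} → ℝ := fun i => (Real.sqrt (B i i))⁻¹ with hsdef
  set t : {x // x ∈ M} → ℝ := fun i => (B i i)⁻¹ with htdef
  have hsqrtpos : ∀ i, 0 < Real.sqrt (B i i) := fun i => Real.sqrt_pos.mpr (hBpos i)
  have hdecomp : corr B - 1
      = Matrix.diagonal s * (B - 1) * Matrix.diagonal s + (Matrix.diagonal t - 1) := by
    ext i j
    simp only [Matrix.add_apply, Matrix.sub_apply, Matrix.mul_diagonal, Matrix.diagonal_mul,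
      corr, Matrix.of_apply]
    by_cases hij : i = j
    · subst hij
      rw [Matrix.diagonal_apply_eq]
      have h1 : Real.sqrt (B i i) * Real.sqrt (B i i) = B i i := Real.mul_self_sqrt (hBpos i).le
      have hs2 : s i * s i = (B i i)⁻¹ := by
        rw [hsdef]; rw [← mul_inv, h1]
      simp only [Matrix.one_apply_eq]
      rw [h1, div_self (hBpos i).ne', htdef]
      linear_combination (-(B i i - 1)) * hs2 - mul_inv_cancel₀ (hBpos i).ne'
    · rw [Matrix.diagonal_apply_ne _ hij]
      simp only [Matrix.one_apply_ne hij]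
      rw [hsdef]
      field_simp
      ring
  have hsnorm : ‖Matrix.diagonal s‖ ≤ (Real.sqrt (1 - κ))⁻¹ := by
    refine opNorm_diagonal_le s _ (by positivity) fun i => ?_
    rw [abs_of_nonneg (by positivity)]
    exact inv_anti₀ (Real.sqrt_pos.mpr hκ') (Real.sqrt_le_sqrt (hBlo i))
  have htnorm : ‖Matrix.diagonal t - 1‖ ≤ κ / (1 - κ) := by
    have : Matrix.diagonal t - 1 = Matrix.diagonal (fun i => t i - 1) := by
      rw [← Matrix.diagonal_one, Matrix.diagonal_sub]
    rw [this]
    refine opNorm_diagonal_le _ _ (by positivity) fun i => ?_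
    have hbi := hBpos i
    have : t i - 1 = (1 - B i i) / B i i := by rw [htdef]; field_simp
    rw [this, abs_div, abs_of_pos hbi]
    refine div_le_div₀ hκ0 ?_ hκ' (hBlo i)
    rw [abs_sub_comm]; exact hdiagB i
  have key : ‖corr B - 1‖ ≤ 2 * κ / (1 - κ) := by
    rw [hdecomp]
    calc ‖Matrix.diagonal s * (B - 1) * Matrix.diagonal s + (Matrix.diagonal t - 1)‖
        ≤ ‖Matrix.diagonal s * (B - 1) * Matrix.diagonal s‖ + ‖Matrix.diagonal t - 1‖ :=
          norm_add_le _ _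
      _ ≤ ‖Matrix.diagonal s‖ * ‖B - 1‖ * ‖Matrix.diagonal s‖ + κ / (1 - κ) := by
          gcongr
          exact (norm_mul_le _ _).trans (by gcongr; exact norm_mul_le _ _)
      _ ≤ (Real.sqrt (1 - κ))⁻¹ * κ * (Real.sqrt (1 - κ))⁻¹ + κ / (1 - κ) := by
          have hc : (0:ℝ) ≤ (Real.sqrt (1 - κ))⁻¹ := by positivity
          have hmul : ‖Matrix.diagonal s‖ * ‖B - 1‖ * ‖Matrix.diagonal s‖
              ≤ (Real.sqrt (1 - κ))⁻¹ * κ * (Real.sqrt (1 - κ))⁻¹ :=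
            mul_le_mul (mul_le_mul hsnorm hop' (norm_nonneg _) hc) hsnorm (norm_nonneg _)
              (mul_nonneg hc hκ0)
          linarith
      _ = 2 * κ / (1 - κ) := by
          have h1 : Real.sqrt (1 - κ) * Real.sqrt (1 - κ) = 1 - κ := Real.mul_self_sqrt hκ'.le
          have hc2 : (Real.sqrt (1 - κ))⁻¹ * (Real.sqrt (1 - κ))⁻¹ = (1 - κ)⁻¹ := by
            rw [← mul_inv, h1]
          have h2 : (Real.sqrt (1 - κ))⁻¹ * κ * (Real.sqrt (1 - κ))⁻¹ = κ / (1 - κ) := by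
            rw [div_eq_mul_inv, ← hc2]; ring
          rw [h2, ← add_div, two_mul]
  exact key
end

section
/- Let $\mu \ge 0$, $r \ge 1$, $\zeta \sim \mathcal{N}(0,1)$, $V \sim \chi^2(r)$ independent of $\zeta$, and set $T = (\mu + \zeta)/\sqrt{V/r}$. Then for any $\eta \in (0,1]$ with $2\sqrt{2\log(1/\eta)/r} < 1$, $\mathbb{P}\big(T \ge (\mu + \sqrt{2\log(1/\eta)})/(1 - 2\sqrt{2\log(1/\eta)/r})\big) \le 2\eta$. -/
open MeasureTheory ProbabilityTheory Real
open scoped ENNReal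

lemma aux_gauss_mgf (b : ℝ) :
    ∫⁻ x, ENNReal.ofReal (rexp (b * x)) ∂(gaussianReal 0 1) =
      ENNReal.ofReal (rexp (b ^ 2 / 2)) := by
  rw [gaussianReal_of_var_ne_zero 0 one_ne_zero,
    lintegral_withDensity_eq_lintegral_mul _ (measurable_gaussianPDF 0 1)
      (show Measurable fun x : ℝ => ENNReal.ofReal (rexp (b * x)) by fun_prop)]
  have key : ∀ x, (gaussianPDF 0 1 * fun x => ENNReal.ofReal (rexp (b * x))) x
      = ENNReal.ofReal (rexp (b ^ 2 / 2)) * gaussianPDF b 1 x := by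
    intro x
    simp only [Pi.mul_apply, gaussianPDF, ← ENNReal.ofReal_mul (gaussianPDFReal_nonneg 0 1 x),
      ← ENNReal.ofReal_mul (Real.exp_nonneg _)]
    congr 1
    simp only [gaussianPDFReal, NNReal.coe_one, mul_one, sub_zero]
    rw [mul_left_comm, mul_assoc, ← Real.exp_add, ← Real.exp_add]
    congr 2
    ring
  rw [lintegral_congr key, lintegral_const_mul' _ _ ENNReal.ofReal_ne_top,
    lintegral_gaussianPDF_eq_one b one_ne_zero, mul_one]

lemma aux_gauss_tail {a : ℝ} (ha : 0 ≤ a) :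
    gaussianReal 0 1 {x | a ≤ x} ≤ ENNReal.ofReal (rexp (-(a ^ 2) / 2)) := by
  have h1 : gaussianReal 0 1 {x | a ≤ x}
      = ∫⁻ x, (Set.Ici a).indicator 1 x ∂(gaussianReal 0 1) :=
    (lintegral_indicator_one measurableSet_Ici).symm
  rw [h1]
  have h2 : ∀ x, (Set.Ici a).indicator (1 : ℝ → ℝ≥0∞) x
      ≤ ENNReal.ofReal (rexp (-(a ^ 2)) * rexp (a * x)) := by
    intro x
    by_cases hx : x ∈ Set.Ici a
    · rw [Set.indicator_of_mem hx, ← Real.exp_add]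
      refine ENNReal.one_le_ofReal.2 (Real.one_le_exp ?_)
      have : a * a ≤ a * x := mul_le_mul_of_nonneg_left hx ha
      nlinarith
    · rw [Set.indicator_of_notMem hx]
      exact bot_le
  refine le_trans (lintegral_mono h2) (le_of_eq ?_)
  calc ∫⁻ x, ENNReal.ofReal (rexp (-(a ^ 2)) * rexp (a * x)) ∂(gaussianReal 0 1)
      = ∫⁻ x, ENNReal.ofReal (rexp (-(a ^ 2))) * ENNReal.ofReal (rexp (a * x))
        ∂(gaussianReal 0 1) := by
        simp_rw [ENNReal.ofReal_mul (Real.exp_nonneg _)]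
    _ = ENNReal.ofReal (rexp (-(a ^ 2))) * ENNReal.ofReal (rexp (a ^ 2 / 2)) := by
        rw [lintegral_const_mul' _ _ ENNReal.ofReal_ne_top, aux_gauss_mgf]
    _ = ENNReal.ofReal (rexp (-(a ^ 2) / 2)) := by
        rw [← ENNReal.ofReal_mul (Real.exp_nonneg _), ← Real.exp_add]
        congr 2
        ring

lemma aux_gamma_mgf {a l s : ℝ} (ha : 0 < a) (hl : 0 < l) (hs : 0 ≤ s) :
    ∫⁻ x, ENNReal.ofReal (rexp (-(s * x))) ∂(gammaMeasure a l) =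
      ENNReal.ofReal ((l / (l + s)) ^ a) := by
  have hls : 0 < l + s := by linarith
  rw [gammaMeasure,
    lintegral_withDensity_eq_lintegral_mul _
      (show Measurable (gammaPDF a l) from (measurable_gammaPDFReal a l).ennreal_ofReal)
      (show Measurable fun x : ℝ => ENNReal.ofReal (rexp (-(s * x))) by fun_prop)]
  have key : ∀ x, (gammaPDF a l * fun x => ENNReal.ofReal (rexp (-(s * x)))) x
      = ENNReal.ofReal ((l / (l + s)) ^ a) * gammaPDF a (l + s) x := by
    intro x
    simp only [Pi.mul_apply]
    rcases lt_or_ge x 0 with hx | hx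
    · rw [gammaPDF_of_neg hx, gammaPDF_of_neg hx, zero_mul, mul_zero]
    · rw [gammaPDF_of_nonneg hx, gammaPDF_of_nonneg hx,
        ← ENNReal.ofReal_mul (by positivity), ← ENNReal.ofReal_mul (by positivity)]
      congr 1
      have hG : Real.Gamma a ≠ 0 := (Real.Gamma_pos_of_pos ha).ne'
      have hlsa : (0:ℝ) < (l + s) ^ a := Real.rpow_pos_of_pos hls a
      rw [Real.div_rpow hl.le hls.le]
      have hexp : rexp (-(l * x)) * rexp (-(s * x)) = rexp (-((l + s) * x)) := by
        rw [← Real.exp_add]; ring_nf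
      field_simp
      linear_combination (norm := ring_nf) x ^ (a - 1) * hexp
  rw [lintegral_congr key, lintegral_const_mul' _ _ ENNReal.ofReal_ne_top,
    lintegral_gammaPDF_eq_one ha hls, mul_one]

lemma aux_gamma_tail {a l s v : ℝ} (ha : 0 < a) (hl : 0 < l) (hs : 0 ≤ s) :
    gammaMeasure a l {x | x ≤ v} ≤ ENNReal.ofReal (rexp (s * v) * (l / (l + s)) ^ a) := by
  have h1 : gammaMeasure a l {x | x ≤ v}
      = ∫⁻ x, (Set.Iic v).indicator 1 x ∂(gammaMeasure a l) :=
    (lintegral_indicator_one measurableSet_Iic).symm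
  rw [h1]
  have h2 : ∀ x, (Set.Iic v).indicator (1 : ℝ → ℝ≥0∞) x
      ≤ ENNReal.ofReal (rexp (s * v) * rexp (-(s * x))) := by
    intro x
    by_cases hx : x ∈ Set.Iic v
    · rw [Set.indicator_of_mem hx, ← Real.exp_add]
      refine ENNReal.one_le_ofReal.2 (Real.one_le_exp ?_)
      have : s * x ≤ s * v := mul_le_mul_of_nonneg_left hx hs
      linarith
    · rw [Set.indicator_of_notMem hx]
      exact bot_le
  refine le_trans (lintegral_mono h2) (le_of_eq ?_)
  simp_rw [ENNReal.ofReal_mul (Real.exp_nonneg (s * v))]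
  rw [lintegral_const_mul' _ _ ENNReal.ofReal_ne_top, aux_gamma_mgf ha hl hs,
    ← ENNReal.ofReal_mul (Real.exp_nonneg _)]

lemma aux_log {u : ℝ} (hu : 0 ≤ u) : u - u ^ 2 ≤ Real.log (1 + u) := by
  have h1 : (0:ℝ) < 1 + u := by linarith
  have h2 := Real.log_le_sub_one_of_pos (show (0:ℝ) < (1 + u)⁻¹ by positivity)
  rw [Real.log_inv] at h2
  have h3 : (1:ℝ) - (1 + u)⁻¹ = u / (1 + u) := by field_simp; ring
  have h4 : u - u ^ 2 ≤ u / (1 + u) := by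
    rw [le_div_iff₀ h1]; nlinarith
  linarith

set_option maxHeartbeats 1000000 in
theorem stmt_13 (r : ℕ) (hr : 1 ≤ r) (μ₀ : ℝ) (hμ₀ : 0 ≤ μ₀)
    {Ω : Type*} [MeasurableSpace Ω] (μ : Measure Ω) [IsProbabilityMeasure μ]
    (ζ V : Ω → ℝ)
    (hζ : μ.map ζ = gaussianReal 0 1)
    (hV : μ.map V = gammaMeasure ((r : ℝ) / 2) (1 / 2))
    (hindep : IndepFun ζ V μ)
    (η : ℝ) (hη : η ∈ Set.Ioc (0 : ℝ) 1)
    (hsmall : 2 * Real.sqrt (2 * Real.log (1 / η) / r) < 1) :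
    μ {ω | (μ₀ + Real.sqrt (2 * Real.log (1 / η))) /
          (1 - 2 * Real.sqrt (2 * Real.log (1 / η) / r)) ≤
        (μ₀ + ζ ω) / Real.sqrt (V ω / r)} ≤
      ENNReal.ofReal (2 * η) := by
  obtain ⟨hη0, hη1⟩ := hη
  by_cases hbig : 1 ≤ 2 * η
  · refine le_trans prob_le_one ?_
    rw [← ENNReal.ofReal_one]
    exact ENNReal.ofReal_le_ofReal hbig
  push_neg at hbig
  set L := Real.log (1 / η) with hLdef
  have hL : 0 < L := Real.log_pos (by rw [lt_div_iff₀ hη0]; linarith)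
  set a := Real.sqrt (2 * L) with hadef
  have ha : 0 < a := Real.sqrt_pos.2 (by linarith)
  have ha2 : a ^ 2 = 2 * L := Real.sq_sqrt (by linarith)
  set ρ := (r : ℝ) with hρdef
  have hρ : (1:ℝ) ≤ ρ := by rw [hρdef]; exact_mod_cast hr
  have hρ0 : (0:ℝ) < ρ := by linarith
  have hsqρ : 0 < Real.sqrt ρ := Real.sqrt_pos.2 hρ0
  have hsqρ2 : Real.sqrt ρ ^ 2 = ρ := Real.sq_sqrt hρ0.le
  have hdivsqrt : Real.sqrt (2 * L / ρ) = a / Real.sqrt ρ := Real.sqrt_div (by linarith) ρ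
  have h2a : 2 * a < Real.sqrt ρ := by
    rw [hdivsqrt, ← mul_div_assoc] at hsmall
    exact (div_lt_one hsqρ).1 hsmall
  set c := Real.sqrt ρ - 2 * a with hcdef
  have hc : 0 < c := by rw [hcdef]; linarith
  set v := c ^ 2 with hvdef
  have hvρ : v ≤ ρ := by
    rw [hvdef, ← hsqρ2]
    apply pow_le_pow_left₀ hc.le
    rw [hcdef]; linarith
  have hv0 : 0 ≤ v := by positivity
  set s := (ρ - v) / (4 * ρ) with hsdef
  have hs : 0 ≤ s := by
    apply div_nonneg (by linarith) (by linarith)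
  have hden : 1 - 2 * Real.sqrt (2 * L / ρ) = c / Real.sqrt ρ := by
    rw [hdivsqrt, hcdef]
    field_simp
  rw [hden]
  -- event inclusion
  have hincl : {ω | (μ₀ + a) / (c / Real.sqrt ρ) ≤ (μ₀ + ζ ω) / Real.sqrt (V ω / ρ)}
      ⊆ (ζ ⁻¹' Set.Ici a) ∪ (V ⁻¹' Set.Iic v) := by
    intro ω hω
    by_contra hcon
    simp only [Set.mem_union, Set.mem_preimage, Set.mem_Ici, Set.mem_Iic, not_or, not_le] at hcon
    obtain ⟨hζω, hVω⟩ := hcon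
    simp only [Set.mem_setOf_eq] at hω
    have hV0 : 0 < V ω := lt_of_le_of_lt hv0 hVω
    have hcd : 0 < c / Real.sqrt ρ := div_pos hc hsqρ
    have hd : c / Real.sqrt ρ < Real.sqrt (V ω / ρ) := by
      rw [Real.sqrt_div hV0.le]
      refine (div_lt_div_iff_of_pos_right hsqρ).2 ?_
      calc c = Real.sqrt v := by rw [hvdef, Real.sqrt_sq hc.le]
        _ < Real.sqrt (V ω) := Real.sqrt_lt_sqrt hv0 hVω
    rcases le_or_gt (μ₀ + ζ ω) 0 with h0 | h0
    · have hT : (μ₀ + ζ ω) / Real.sqrt (V ω / ρ) ≤ 0 :=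
        div_nonpos_iff.2 (Or.inr ⟨h0, Real.sqrt_nonneg _⟩)
      have ht : 0 < (μ₀ + a) / (c / Real.sqrt ρ) := div_pos (by linarith) hcd
      linarith
    · have hlt : (μ₀ + ζ ω) / Real.sqrt (V ω / ρ) < (μ₀ + a) / (c / Real.sqrt ρ) :=
        div_lt_div₀ (by linarith) hd.le (by linarith) hcd
      linarith
  -- measurability
  have hζm : AEMeasurable ζ μ := aemeasurable_of_map_neZero (by rw [hζ]; infer_instance)
  haveI hVprob : IsProbabilityMeasure (gammaMeasure (ρ / 2) (1 / 2)) :=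
    isProbabilityMeasure_gammaMeasure (by linarith) (by norm_num)
  have hVm : AEMeasurable V μ := aemeasurable_of_map_neZero (by rw [hV]; infer_instance)
  -- gaussian bound
  have hA : μ (ζ ⁻¹' Set.Ici a) ≤ ENNReal.ofReal η := by
    rw [← Measure.map_apply_of_aemeasurable hζm measurableSet_Ici, hζ]
    refine le_trans (aux_gauss_tail ha.le) (le_of_eq ?_)
    congr 1
    rw [ha2, show -(2 * L) / 2 = -L from by ring, hLdef, one_div, Real.log_inv, neg_neg,
      Real.exp_log hη0]
  -- gamma bound
  have hB : μ (V ⁻¹' Set.Iic v) ≤ ENNReal.ofReal η := by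
    rw [← Measure.map_apply_of_aemeasurable hVm measurableSet_Iic, hV]
    refine le_trans (aux_gamma_tail (show (0:ℝ) < ρ / 2 by linarith)
      (show (0:ℝ) < 1 / 2 by norm_num) hs) (ENNReal.ofReal_le_ofReal ?_)
    have hq : (1 / 2 : ℝ) / (1 / 2 + s) = 1 / (1 + 2 * s) := by
      rw [div_eq_div_iff (by linarith) (by linarith)]; ring
    rw [hq]
    have hq0 : (0:ℝ) < 1 / (1 + 2 * s) := by positivity
    rw [Real.rpow_def_of_pos hq0, ← Real.exp_add, one_div, Real.log_inv]
    have hηexp : η = rexp (-L) := by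
      rw [hLdef, one_div, Real.log_inv, neg_neg, Real.exp_log hη0]
    rw [hηexp]
    apply Real.exp_le_exp.2
    have hlb := aux_log (show (0:ℝ) ≤ 2 * s by linarith)
    have hkeyd : ρ - v = 4 * Real.sqrt ρ * a - 4 * a ^ 2 := by
      rw [hvdef, hcdef]; linear_combination -hsqρ2
    have hkey : 2 * Real.sqrt ρ * a ≤ ρ - v := by
      nlinarith [hkeyd, mul_nonneg ha.le (sub_nonneg.2 h2a.le)]
    have hkey2 : 4 * ρ * a ^ 2 ≤ (ρ - v) ^ 2 := by
      have h1 := mul_self_le_mul_self (by positivity : (0:ℝ) ≤ 2 * Real.sqrt ρ * a) hkey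
      nlinarith [h1, hsqρ2]
    have hid : s * v - ρ * s + 2 * ρ * s ^ 2 = -((ρ - v) ^ 2 / (8 * ρ)) := by
      rw [hsdef]; field_simp; ring
    have hdiv : L ≤ (ρ - v) ^ 2 / (8 * ρ) := by
      rw [le_div_iff₀ (by linarith)]
      have h8 : 4 * ρ * a ^ 2 = 8 * ρ * L := by rw [ha2]; ring
      linarith
    have hmul : -Real.log (1 + 2 * s) * (ρ / 2) ≤ -(2 * s - (2 * s) ^ 2) * (ρ / 2) :=
      mul_le_mul_of_nonneg_right (by linarith) (by linarith)
    have heq2 : -(2 * s - (2 * s) ^ 2) * (ρ / 2) = -(ρ * s) + 2 * ρ * s ^ 2 := by ring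
    linarith
  calc μ {ω | (μ₀ + a) / (c / Real.sqrt ρ) ≤ (μ₀ + ζ ω) / Real.sqrt (V ω / ρ)}
      ≤ μ ((ζ ⁻¹' Set.Ici a) ∪ (V ⁻¹' Set.Iic v)) := measure_mono hincl
    _ ≤ μ (ζ ⁻¹' Set.Ici a) + μ (V ⁻¹' Set.Iic v) := measure_union_le _ _
    _ ≤ ENNReal.ofReal η + ENNReal.ofReal η := add_le_add hA hB
    _ = ENNReal.ofReal (2 * η) := by
        rw [← ENNReal.ofReal_add hη0.le hη0.le]; congr 1; ring
end

section
/- Let $1 \le s \le n$ and $s \le p$, and let $\{w_j\}_{j \in J}$ be a family of unit vectors in $\mathbb{R}^n$ indexed by the set $J$ of pairs $(M, i)$ with $M \subset \{1,\dots,p\}$ nonempty, $|M| \le s$, and $i \in M$. If $\xi \sim \mathcal{N}(0, I_n)$, then $\mathbb{E}[\max_{j \in J} |w_j^t \xi|] \le \sqrt{2 s \log(6p/s)}$. -/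
open MeasureTheory ProbabilityTheory Real

lemma aux_pdf_mul (c x : ℝ) :
    Real.exp (c * x) * gaussianPDFReal 0 1 x = Real.exp (c^2/2) * gaussianPDFReal c 1 x := by
  simp only [gaussianPDFReal, NNReal.coe_one, mul_one, sub_zero]
  rw [mul_left_comm, mul_left_comm (Real.exp (c^2/2)), ← Real.exp_add, ← Real.exp_add]
  ring_nf

lemma aux_gauss_eq : gaussianReal 0 1
    = (volume : Measure ℝ).withDensity (fun x => ((Real.toNNReal (gaussianPDFReal 0 1 x)) : ENNReal)) := by
  rw [gaussianReal_of_var_ne_zero 0 one_ne_zero]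
  rfl

lemma aux_integrable_exp_gaussian (c : ℝ) :
    Integrable (fun x => Real.exp (c * x)) (gaussianReal 0 1) := by
  rw [aux_gauss_eq, integrable_withDensity_iff_integrable_smul
    ((measurable_gaussianPDFReal 0 1).real_toNNReal)]
  have : (fun x => (Real.toNNReal (gaussianPDFReal 0 1 x)) • Real.exp (c * x))
      = fun x => Real.exp (c^2/2) * gaussianPDFReal c 1 x := by
    funext x
    rw [NNReal.smul_def, Real.coe_toNNReal _ (gaussianPDFReal_nonneg 0 1 x),
      smul_eq_mul, mul_comm (gaussianPDFReal 0 1 x), aux_pdf_mul]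
  rw [this]
  exact (integrable_gaussianPDFReal c 1).const_mul _

lemma aux_integral_exp_gaussian (c : ℝ) :
    ∫ x, Real.exp (c * x) ∂(gaussianReal 0 1) = Real.exp (c^2/2) := by
  rw [aux_gauss_eq, integral_withDensity_eq_integral_smul
    ((measurable_gaussianPDFReal 0 1).real_toNNReal)]
  have : (fun x => (Real.toNNReal (gaussianPDFReal 0 1 x)) • Real.exp (c * x))
      = fun x => Real.exp (c^2/2) * gaussianPDFReal c 1 x := by
    funext x
    rw [NNReal.smul_def, Real.coe_toNNReal _ (gaussianPDFReal_nonneg 0 1 x),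
      smul_eq_mul, mul_comm (gaussianPDFReal 0 1 x), aux_pdf_mul]
  rw [this, integral_const_mul, integral_gaussianPDFReal_eq_one c one_ne_zero, mul_one]

lemma aux_pi_integrable (n : ℕ) (v : Fin n → ℝ) :
    Integrable (fun ξ : Fin n → ℝ => Real.exp (∑ t, v t * ξ t))
      (Measure.pi fun _ => gaussianReal 0 1) := by
  have h1 : (fun ξ : Fin n → ℝ => Real.exp (∑ t, v t * ξ t))
      = fun ξ => ∏ t, Real.exp (v t * ξ t) := by
    funext ξ; rw [Real.exp_sum]
  rw [h1]
  exact Integrable.fintype_prod (f := fun t x => Real.exp (v t * x))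
    (μ := fun _ => gaussianReal 0 1)
    (fun t => aux_integrable_exp_gaussian (v t))

lemma aux_pi_mgf (n : ℕ) (v : Fin n → ℝ) :
    (∫ ξ : Fin n → ℝ, Real.exp (∑ t, v t * ξ t) ∂(Measure.pi fun _ => gaussianReal 0 1))
      = Real.exp ((∑ t, (v t)^2)/2) := by
  have h1 : (fun ξ : Fin n → ℝ => Real.exp (∑ t, v t * ξ t))
      = fun ξ => ∏ t, Real.exp (v t * ξ t) := by
    funext ξ; rw [Real.exp_sum]
  rw [h1]
  have h2 := MeasureTheory.integral_fintype_prod_eq_prod (𝕜 := ℝ) (E := fun _ : Fin n => ℝ)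
    (fun t x => Real.exp (v t * x)) (μ := fun _ => gaussianReal 0 1)
  rw [show (∫ ξ : Fin n → ℝ, ∏ t, Real.exp (v t * ξ t) ∂(Measure.pi fun _ => gaussianReal 0 1))
      = ∏ t, ∫ x, Real.exp (v t * x) ∂(gaussianReal 0 1) from h2]
  simp_rw [aux_integral_exp_gaussian, ← Real.exp_sum, Finset.sum_div]


lemma aux_exp_ind : ∀ s : ℕ, 1 ≤ s → 2*(s:ℝ)*Real.exp s ≤ 6^s := by
  intro s hs
  induction s with
  | zero => omega
  | succ m ih =>
    rcases Nat.eq_or_lt_of_le hs with h | h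
    · have he := Real.exp_one_lt_d9
      simp only [← h]
      norm_num
      nlinarith [Real.exp_pos 1]
    · have hm : 1 ≤ m := by omega
      have ihm := ih hm
      have h1 : ((m:ℝ)+1) ≤ 2*m := by
        have : (1:ℝ) ≤ m := by exact_mod_cast hm
        linarith
      have he := Real.exp_one_lt_d9
      have hep := Real.exp_pos (m:ℝ)
      have : Real.exp ((m:ℝ)+1) = Real.exp m * Real.exp 1 := by
        rw [← Real.exp_add]
      push_cast
      rw [this]
      calc 2*((m:ℝ)+1)*(Real.exp m * Real.exp 1)
          ≤ 2*(2*m)*(Real.exp m * Real.exp 1) := by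
            apply mul_le_mul_of_nonneg_right (by linarith) (by positivity)
        _ = (2*Real.exp 1) * (2*m*Real.exp m) := by ring
        _ ≤ 6 * 6^m := by
            apply mul_le_mul (by nlinarith) ihm (by positivity) (by norm_num)
        _ = 6^(m+1) := by ring

lemma aux_card (p s : ℕ) (hs : 1 ≤ s) (hsp : s ≤ p) :
    2 * (Fintype.card {q : Σ M : Finset (Fin p), {x // x ∈ M} // q.1.card ≤ s} : ℝ)
      ≤ (6 * p / s)^s := by
  have hsR : (0:ℝ) < s := by exact_mod_cast hs
  have hpS : (1:ℝ) ≤ (p:ℝ)/s := by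
    rw [le_div_iff₀ hsR]; exact_mod_cast by simpa using hsp
  -- cardinality bound in ℕ
  have hcard : Fintype.card {q : Σ M : Finset (Fin p), {x // x ∈ M} // q.1.card ≤ s}
      ≤ s * ∑ i ∈ Finset.range (s+1), p.choose i := by
    have e : {q : Σ M : Finset (Fin p), {x // x ∈ M} // q.1.card ≤ s}
        ≃ Σ M : {M : Finset (Fin p) // M.card ≤ s}, {x // x ∈ M.1} :=
      { toFun := fun q => ⟨⟨q.1.1, q.2⟩, q.1.2⟩
        invFun := fun r => ⟨⟨r.1.1, r.2⟩, r.1.2⟩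
        left_inv := fun q => rfl
        right_inv := fun r => rfl }
    rw [Fintype.card_congr e, Fintype.card_sigma]
    have h1 : ∀ M : {M : Finset (Fin p) // M.card ≤ s},
        Fintype.card {x // x ∈ M.1} ≤ s := by
      intro M
      rw [Fintype.card_coe]
      exact M.2
    calc ∑ M : {M : Finset (Fin p) // M.card ≤ s}, Fintype.card {x // x ∈ M.1}
        ≤ ∑ _M : {M : Finset (Fin p) // M.card ≤ s}, s := Finset.sum_le_sum (fun M _ => h1 M)
      _ = Fintype.card {M : Finset (Fin p) // M.card ≤ s} * s := by
          rw [Finset.sum_const, Finset.card_univ, smul_eq_mul]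
      _ ≤ (∑ i ∈ Finset.range (s+1), p.choose i) * s := by
          apply Nat.mul_le_mul_right
          rw [Fintype.card_subtype]
          calc (Finset.univ.filter (fun M : Finset (Fin p) => M.card ≤ s)).card
              ≤ ((Finset.range (s+1)).biUnion
                  (fun i => Finset.powersetCard i (Finset.univ : Finset (Fin p)))).card := by
                apply Finset.card_le_card
                intro M hM
                simp only [Finset.mem_filter] at hM
                rw [Finset.mem_biUnion]
                exact ⟨M.card, Finset.mem_range.2 (by omega),
                  Finset.mem_powersetCard.2 ⟨Finset.subset_univ M, rfl⟩⟩
            _ ≤ ∑ i ∈ Finset.range (s+1), (Finset.powersetCard i (Finset.univ : Finset (Fin p))).card :=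
                Finset.card_biUnion_le
            _ = ∑ i ∈ Finset.range (s+1), p.choose i := by
                simp [Finset.card_powersetCard]
      _ = s * ∑ i ∈ Finset.range (s+1), p.choose i := Nat.mul_comm _ _
  -- to the reals
  have h2 : (Fintype.card {q : Σ M : Finset (Fin p), {x // x ∈ M} // q.1.card ≤ s} : ℝ)
      ≤ s * ∑ i ∈ Finset.range (s+1), (p.choose i : ℝ) := by
    push_cast
    exact_mod_cast hcard
  have h3 : ∑ i ∈ Finset.range (s+1), (p.choose i : ℝ)
      ≤ ((p:ℝ)/s)^s * Real.exp s := by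
    calc ∑ i ∈ Finset.range (s+1), (p.choose i : ℝ)
        ≤ ∑ i ∈ Finset.range (s+1), ((p:ℝ)/s)^s * ((s:ℝ)^i / i.factorial) := by
          apply Finset.sum_le_sum
          intro i hi
          have hi' : i ≤ s := by simpa using Nat.lt_succ_iff.1 (Finset.mem_range.1 hi)
          have hfac : (0:ℝ) < i.factorial := by exact_mod_cast i.factorial_pos
          have hA : (p.choose i : ℝ) ≤ (p:ℝ)^i / i.factorial := by
            rw [le_div_iff₀ hfac]
            have h0 : i.factorial * p.choose i ≤ p ^ i := by
              rw [← Nat.descFactorial_eq_factorial_mul_choose]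
              exact Nat.descFactorial_le_pow p i
            rw [Nat.mul_comm] at h0
            exact_mod_cast h0
          have hB : (p:ℝ)^i ≤ ((p:ℝ)/s)^s * (s:ℝ)^i := by
            have h4 : ((p:ℝ)/s)^i ≤ ((p:ℝ)/s)^s := pow_le_pow_right₀ hpS hi'
            have h5 : ((p:ℝ)/s)^i * (s:ℝ)^i = (p:ℝ)^i := by
              rw [← mul_pow]
              congr 1
              field_simp
            nlinarith [pow_pos hsR i]
          calc (p.choose i : ℝ) ≤ (p:ℝ)^i / i.factorial := hA
            _ ≤ (((p:ℝ)/s)^s * (s:ℝ)^i) / i.factorial := by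
                gcongr
            _ = ((p:ℝ)/s)^s * ((s:ℝ)^i / i.factorial) := by ring
      _ = ((p:ℝ)/s)^s * ∑ i ∈ Finset.range (s+1), ((s:ℝ)^i / i.factorial) := by
          rw [Finset.mul_sum]
      _ ≤ ((p:ℝ)/s)^s * Real.exp s :=
          mul_le_mul_of_nonneg_left (Real.sum_le_exp_of_nonneg hsR.le (s+1))
            (by positivity)
  have h6 : (6 * (p:ℝ) / s)^s = 6^s * ((p:ℝ)/s)^s := by
    rw [← mul_pow, mul_div_assoc]
  rw [h6]
  calc 2 * (Fintype.card {q : Σ M : Finset (Fin p), {x // x ∈ M} // q.1.card ≤ s} : ℝ)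
      ≤ 2 * (s * (((p:ℝ)/s)^s * Real.exp s)) := by
        apply mul_le_mul_of_nonneg_left _ (by norm_num)
        exact h2.trans (mul_le_mul_of_nonneg_left h3 hsR.le)
    _ = (2 * s * Real.exp s) * ((p:ℝ)/s)^s := by ring
    _ ≤ 6^s * ((p:ℝ)/s)^s := by
        apply mul_le_mul_of_nonneg_right _ (by positivity)
        have := aux_exp_ind s hs
        simpa using this


lemma aux_main (n : ℕ) (ι : Type*) [Fintype ι] [Nonempty ι] (w : ι → Fin n → ℝ)
    (hsum : ∀ j, ∑ t, (w j t)^2 = 1) (L : ℝ) (hL : 0 < L)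
    (hcard : 2 * (Fintype.card ι : ℝ) ≤ Real.exp L) :
    (∫ ξ : Fin n → ℝ, (⨆ j : ι, |∑ t, w j t * ξ t|)
        ∂(Measure.pi fun _ : Fin n => gaussianReal 0 1)) ≤ Real.sqrt (2 * L) := by
  classical
  set μ := Measure.pi fun _ : Fin n => gaussianReal 0 1 with hμ
  haveI : IsProbabilityMeasure μ := by rw [hμ]; infer_instance
  set X : ι → (Fin n → ℝ) → ℝ := fun j ξ => ∑ t, w j t * ξ t with hX
  have hXmeas : ∀ j, Measurable (X j) := by
    intro j
    exact Finset.measurable_sum _ (fun t _ => (measurable_pi_apply t).const_mul _)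
  set lam : ℝ := Real.sqrt (2 * L) with hlam
  have hlam_pos : 0 < lam := Real.sqrt_pos.2 (by linarith)
  have hlam_sq : lam ^ 2 = 2 * L := Real.sq_sqrt (by linarith)
  -- MGF facts
  have hrw : ∀ (j : ι) (c : ℝ), (fun ξ : Fin n → ℝ => Real.exp (c * X j ξ))
      = fun ξ => Real.exp (∑ t, (c * w j t) * ξ t) := by
    intro j c
    funext ξ
    rw [hX]
    simp only []
    rw [Finset.mul_sum]
    congr 1
    exact Finset.sum_congr rfl fun t _ => by ring
  have hmgf_int : ∀ (j : ι) (c : ℝ), Integrable (fun ξ => Real.exp (c * X j ξ)) μ := by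
    intro j c
    rw [hrw j c, hμ]
    exact aux_pi_integrable n _
  have hmgf : ∀ (j : ι) (c : ℝ),
      (∫ ξ, Real.exp (c * X j ξ) ∂μ) = Real.exp (c^2/2) := by
    intro j c
    rw [hrw j c, hμ, aux_pi_mgf n _]
    congr 1
    have : ∑ t, (c * w j t)^2 = c^2 * ∑ t, (w j t)^2 := by
      rw [Finset.mul_sum]
      exact Finset.sum_congr rfl fun t _ => by ring
    rw [this, hsum j, mul_one]
  -- the max function
  set F : (Fin n → ℝ) → ℝ := fun ξ => ⨆ j : ι, |X j ξ| with hF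
  have hF_eq : ∀ ξ, F ξ = Finset.univ.sup' Finset.univ_nonempty (fun j : ι => |X j ξ|) := by
    intro ξ
    rw [hF]
    exact (Finset.sup'_univ_eq_ciSup _).symm
  have hFmeas : Measurable F := by
    have h0 : F = fun ξ => Finset.univ.sup' Finset.univ_nonempty (fun j : ι => |X j ξ|) :=
      funext hF_eq
    rw [h0]
    have h2 : ∀ (t : Finset ι) (ht : t.Nonempty),
        Measurable (fun ξ => t.sup' ht (fun j : ι => |X j ξ|)) := by
      intro t ht
      refine Finset.Nonempty.cons_induction
        (motive := fun t ht => Measurable (fun ξ => t.sup' ht (fun j : ι => |X j ξ|))) ?_ ?_ ht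
      · intro a
        have : (fun ξ => Finset.sup' {a} (Finset.singleton_nonempty a) (fun j : ι => |X j ξ|))
            = fun ξ => |X a ξ| := by
          funext ξ
          exact Finset.sup'_singleton (f := fun j : ι => |X j ξ|) (b := a)
        exact this ▸ (hXmeas a).abs
      · intro a t' ha ht' ih
        have heq : (fun ξ => (Finset.cons a t' ha).sup' (Finset.cons_nonempty ha) (fun j : ι => |X j ξ|))
            = fun ξ => |X a ξ| ⊔ t'.sup' ht' (fun j : ι => |X j ξ|) := by
          funext ξ
          exact Finset.sup'_cons ht' (fun j : ι => |X j ξ|)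
        exact heq ▸ Measurable.sup ((hXmeas a).abs) ih
    exact h2 _ _
  have hF0 : ∀ ξ, 0 ≤ F ξ := by
    intro ξ
    rw [hF_eq ξ]
    exact le_trans (abs_nonneg (X (Classical.arbitrary ι) ξ))
      (Finset.le_sup' (fun j : ι => |X j ξ|) (Finset.mem_univ _))
  -- pointwise exponential bound
  have hFG : ∀ ξ, Real.exp (lam * F ξ)
      ≤ ∑ j : ι, (Real.exp (lam * X j ξ) + Real.exp (-lam * X j ξ)) := by
    intro ξ
    obtain ⟨j0, -, hj0⟩ := Finset.exists_mem_eq_sup' (Finset.univ_nonempty (α := ι))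
      (fun j : ι => |X j ξ|)
    rw [hF_eq ξ, hj0]
    have h1 : Real.exp (lam * |X j0 ξ|) ≤ Real.exp (lam * X j0 ξ) + Real.exp (-lam * X j0 ξ) := by
      rcases abs_cases (X j0 ξ) with ⟨h, -⟩ | ⟨h, -⟩
      · rw [h]
        have := (Real.exp_pos (-lam * X j0 ξ)).le
        linarith
      · rw [h]
        have := (Real.exp_pos (lam * X j0 ξ)).le
        rw [mul_neg, ← neg_mul]
        linarith
    refine h1.trans ?_
    exact Finset.single_le_sum
      (f := fun j : ι => Real.exp (lam * X j ξ) + Real.exp (-lam * X j ξ))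
      (fun j _ => by positivity) (Finset.mem_univ j0)
  have hGint : Integrable
      (fun ξ => ∑ j : ι, (Real.exp (lam * X j ξ) + Real.exp (-lam * X j ξ))) μ := by
    apply integrable_finset_sum
    intro j _
    exact (hmgf_int j lam).add (hmgf_int j (-lam))
  have hGval : (∫ ξ, (∑ j : ι, (Real.exp (lam * X j ξ) + Real.exp (-lam * X j ξ))) ∂μ)
      = 2 * (Fintype.card ι : ℝ) * Real.exp (lam^2/2) := by
    rw [integral_finset_sum (f := fun (j : ι) ξ => Real.exp (lam * X j ξ) + Real.exp (-lam * X j ξ))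
      Finset.univ (fun j _ => (hmgf_int j lam).add (hmgf_int j (-lam)))]
    have h4 : ∀ j : ι, (∫ ξ, (Real.exp (lam * X j ξ) + Real.exp (-lam * X j ξ)) ∂μ)
        = 2 * Real.exp (lam^2/2) := by
      intro j
      rw [integral_add (hmgf_int j lam) (hmgf_int j (-lam)), hmgf j lam, hmgf j (-lam)]
      ring_nf
    simp only [h4, Finset.sum_const, Finset.card_univ, nsmul_eq_mul]
    ring
  -- integrability of exp (lam * F) and of F
  have hexpFmeas : Measurable fun ξ => Real.exp (lam * F ξ) :=
    (Real.measurable_exp.comp (hFmeas.const_mul lam))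
  have hexpFint : Integrable (fun ξ => Real.exp (lam * F ξ)) μ := by
    apply Integrable.mono hGint hexpFmeas.aestronglyMeasurable
    filter_upwards with ξ
    rw [Real.norm_eq_abs, Real.norm_eq_abs, abs_of_pos (Real.exp_pos _)]
    refine (hFG ξ).trans (le_abs_self _)
  have hFint : Integrable F μ := by
    apply Integrable.mono (hexpFint.const_mul (1/lam)) hFmeas.aestronglyMeasurable
    filter_upwards with ξ
    rw [Real.norm_eq_abs, Real.norm_eq_abs, abs_of_nonneg (hF0 ξ)]
    have h1 : lam * F ξ ≤ Real.exp (lam * F ξ) := by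
      have := Real.add_one_le_exp (lam * F ξ)
      linarith
    rw [abs_of_pos (by positivity)]
    calc F ξ = (lam * F ξ) / lam := by field_simp
      _ ≤ Real.exp (lam * F ξ) / lam := by gcongr
      _ = 1/lam * Real.exp (lam * F ξ) := by ring
  -- Jensen
  have hjensen : Real.exp (∫ ξ, lam * F ξ ∂μ) ≤ ∫ ξ, Real.exp (lam * F ξ) ∂μ := by
    exact convexOn_exp.map_integral_le Real.continuous_exp.continuousOn isClosed_univ
      (f := fun ξ => lam * F ξ) (μ := μ)
      (Filter.Eventually.of_forall (fun ξ => Set.mem_univ _))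
      (hFint.const_mul lam) (by exact hexpFint)
  -- combine
  have hmain : lam * (∫ ξ, F ξ ∂μ) ≤ 2 * L := by
    have h1 : Real.exp (lam * ∫ ξ, F ξ ∂μ) ≤ Real.exp (2 * L) := by
      calc Real.exp (lam * ∫ ξ, F ξ ∂μ)
          = Real.exp (∫ ξ, lam * F ξ ∂μ) := by rw [integral_const_mul]
        _ ≤ ∫ ξ, Real.exp (lam * F ξ) ∂μ := hjensen
        _ ≤ ∫ ξ, (∑ j : ι, (Real.exp (lam * X j ξ) + Real.exp (-lam * X j ξ))) ∂μ :=
            integral_mono hexpFint hGint (fun ξ => hFG ξ)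
        _ = 2 * (Fintype.card ι : ℝ) * Real.exp (lam^2/2) := hGval
        _ ≤ Real.exp L * Real.exp (lam^2/2) :=
            mul_le_mul_of_nonneg_right hcard (Real.exp_pos _).le
        _ = Real.exp (2 * L) := by
            rw [← Real.exp_add, hlam_sq]
            ring_nf
    exact (Real.exp_le_exp).1 h1
  have hfinal : (∫ ξ, F ξ ∂μ) ≤ Real.sqrt (2 * L) := by
    rw [← Real.div_sqrt (x := 2 * L), ← hlam, le_div_iff₀ hlam_pos]
    linarith [hmain]
  exact hfinal

theorem stmt_19 (n p s : ℕ) (hs : 1 ≤ s) (hsn : s ≤ n) (hsp : s ≤ p)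
    (w : {q : Σ M : Finset (Fin p), {x // x ∈ M} // q.1.card ≤ s} → (Fin n → ℝ))
    (hw : ∀ j, Real.sqrt (∑ t, (w j t) ^ 2) = 1) :
    (∫ ξ : Fin n → ℝ,
        (⨆ j : {q : Σ M : Finset (Fin p), {x // x ∈ M} // q.1.card ≤ s},
          |∑ t, w j t * ξ t|)
        ∂(Measure.pi fun _ : Fin n => gaussianReal 0 1)) ≤
      Real.sqrt (2 * s * Real.log (6 * p / s)) := by
  have hp : 0 < p := lt_of_lt_of_le hs hsp
  haveI hne : Nonempty {q : Σ M : Finset (Fin p), {x // x ∈ M} // q.1.card ≤ s} := by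
    refine ⟨⟨⟨{⟨0, hp⟩}, ⟨⟨0, hp⟩, Finset.mem_singleton_self _⟩⟩, ?_⟩⟩
    simpa using hs
  have hsR : (0:ℝ) < s := by exact_mod_cast hs
  have hx6 : (1:ℝ) < 6 * p / s := by
    rw [lt_div_iff₀ hsR]
    have : (s:ℝ) ≤ p := by exact_mod_cast hsp
    nlinarith
  have hL : 0 < (s:ℝ) * Real.log (6 * p / s) := mul_pos hsR (Real.log_pos hx6)
  have hsum : ∀ j, ∑ t, (w j t)^2 = 1 := fun j => Real.sqrt_eq_one.1 (hw j)
  have hcard : 2 * (Fintype.card {q : Σ M : Finset (Fin p), {x // x ∈ M} // q.1.card ≤ s} : ℝ)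
      ≤ Real.exp ((s:ℝ) * Real.log (6 * p / s)) := by
    have h2 : Real.exp ((s:ℝ) * Real.log (6 * p / s)) = (6 * (p:ℝ) / s)^s := by
      rw [← Real.log_pow, Real.exp_log (pow_pos (by linarith) s)]
    rw [h2]
    exact aux_card p s hs hsp
  have hmain := aux_main n _ w hsum _ hL hcard
  calc (∫ ξ : Fin n → ℝ,
        (⨆ j : {q : Σ M : Finset (Fin p), {x // x ∈ M} // q.1.card ≤ s},
          |∑ t, w j t * ξ t|)
        ∂(Measure.pi fun _ : Fin n => gaussianReal 0 1))
      ≤ Real.sqrt (2 * ((s:ℝ) * Real.log (6 * p / s))) := hmain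
    _ = Real.sqrt (2 * s * Real.log (6 * p / s)) := by rw [mul_assoc]
end
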